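/- Let p be a prime, let u₁, …, u_r ∈ 𝔽_p² be pairwise non-parallel nonzero vectors (r ≥ 2), and let t₁, …, t_r be positive integers with each t_j < p. Suppose 2^r · ∏_j t_j · p^{r−2} < (p−1)^r. Then there exist nonzero scalars s₁, …, s_r ∈ 𝔽_p such that all the sums ∑_{j=1}^r a_j·s_j·u_j over 0 ≤ a_j < t_j are pairwise distinct; i.e., the generalized arithmetic box they generate has exactly ∏_j t_j elements. -/
import Mathlib

open Finset

/-- Two non-parallel nonzero vectors in `(Fin 2 → ZMod p)` are linearly independent. -/
lemma aux_lin_indep_17 {p : ℕ} [Fact p.Prime] (u₀ u₁ : Fin 2 → ZMod p)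
    (h1 : u₁ ≠ 0) (hpar : ∀ c : ZMod p, u₀ ≠ c • u₁)
    (a b : ZMod p) (h : a • u₀ + b • u₁ = 0) : a = 0 ∧ b = 0 := by
  by_cases ha : a = 0
  · subst ha
    simp only [zero_smul, zero_add] at h
    rcases smul_eq_zero.mp h with hb | hu
    · exact ⟨rfl, hb⟩
    · exact absurd hu h1
  · exfalso
    apply hpar (-(a⁻¹ * b))
    have : a • u₀ = (-b) • u₁ := by
      rw [neg_smul]
      linear_combination (norm := module) h
    have h2 : a⁻¹ • (a • u₀) = a⁻¹ • ((-b) • u₁) := by rw [this]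
    rw [smul_smul, smul_smul, inv_mul_cancel₀ ha, one_smul] at h2
    rw [h2]
    congr 1
    ring

/-- Generalized arithmetic box in `𝔽_p²`: given pairwise non-parallel nonzero vectors
`u₁, …, u_r` (`r ≥ 2`) and side lengths `t_j < p` with
`2^r · ∏_j t_j · p^{r-2} < (p-1)^r`, there are nonzero scalars `s_j` so that all the
sums `∑_j a_j s_j u_j` with `0 ≤ a_j < t_j` are pairwise distinct. -/
theorem stmt_17 (p : ℕ) (hp : p.Prime) (r : ℕ) (hr : 2 ≤ r)
    (u : Fin r → Fin 2 → ZMod p)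
    (hu0 : ∀ j, u j ≠ 0)
    (hupar : ∀ j j', j ≠ j' → ∀ c : ZMod p, u j ≠ c • u j')
    (t : Fin r → ℕ) (ht1 : ∀ j, 1 ≤ t j) (htp : ∀ j, t j < p)
    (hcount : (2 : ℝ) ^ r * (∏ j, (t j : ℝ)) * (p : ℝ) ^ (r - 2) <
      ((p : ℝ) - 1) ^ r) :
    ∃ s : Fin r → ZMod p, (∀ j, s j ≠ 0) ∧
      ∀ a b : Fin r → ℕ, (∀ j, a j < t j) → (∀ j, b j < t j) →
        (∑ j, (a j : ZMod p) • (s j • u j)) = (∑ j, (b j : ZMod p) • (s j • u j)) →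
        a = b := by
  haveI : Fact p.Prime := ⟨hp⟩
  classical
  -- the set of candidate nonzero scalar tuples
  set S : Finset (Fin r → ZMod p) :=
    Fintype.piFinset (fun _ => ({0}ᶜ : Finset (ZMod p))) with hS
  -- possible coordinate differences
  set Dj : Fin r → Finset (ZMod p) :=
    fun j => (Finset.Ioo (-(t j : ℤ)) (t j)).image (fun n : ℤ => (n : ZMod p)) with hDj
  set D : Finset (Fin r → ZMod p) := Fintype.piFinset Dj with hD
  -- solution sets of the bad equations
  set Sol : (Fin r → ZMod p) → Finset (Fin r → ZMod p) :=
    fun δ => univ.filter (fun s => ∑ j, δ j • s j • u j = 0) with hSol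
  set Pairs : Finset (Fin r → ZMod p) :=
    D.filter (fun δ => ∃ j j', j ≠ j' ∧ δ j ≠ 0 ∧ δ j' ≠ 0) with hPairs
  set Bad : Finset (Fin r → ZMod p) :=
    S.filter (fun s => ¬ (∀ a b : Fin r → ℕ, (∀ j, a j < t j) → (∀ j, b j < t j) →
      (∑ j, (a j : ZMod p) • (s j • u j)) = (∑ j, (b j : ZMod p) • (s j • u j)) →
      a = b)) with hBad
  -- injectivity of nat cast below p
  have hcast : ∀ {m n : ℕ}, m < p → n < p → (m : ZMod p) = n → m = n := by
    intro m n hm hn h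
    have := congrArg ZMod.val h
    rwa [ZMod.val_natCast_of_lt hm, ZMod.val_natCast_of_lt hn] at this
  -- Step 1: Bad ⊆ Pairs.biUnion Sol
  have hsub : Bad ⊆ Pairs.biUnion Sol := by
    intro s hs
    rw [hBad, mem_filter] at hs
    obtain ⟨hsS, hbad⟩ := hs
    push_neg at hbad
    obtain ⟨a, b, ha, hb, heq, hab⟩ := hbad
    have hs0 : ∀ j, s j ≠ 0 := by
      intro j
      have := Fintype.mem_piFinset.mp hsS j
      simpa using this
    set δ : Fin r → ZMod p := fun j => (a j : ZMod p) - (b j : ZMod p) with hδ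
    have hδD : δ ∈ D := by
      rw [hD, Fintype.mem_piFinset]
      intro j
      rw [hDj]
      refine mem_image.mpr ⟨(a j : ℤ) - (b j : ℤ), ?_, ?_⟩
      · rw [mem_Ioo]
        have := ha j; have := hb j
        omega
      · push_cast
        rfl
    have hsol : ∑ j, δ j • s j • u j = 0 := by
      have : ∑ j, δ j • s j • u j
          = (∑ j, (a j : ZMod p) • (s j • u j)) - ∑ j, (b j : ZMod p) • (s j • u j) := by
        rw [← Finset.sum_sub_distrib]
        refine Finset.sum_congr rfl fun j _ => ?_
        rw [hδ, sub_smul]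
      rw [this, heq, sub_self]
    -- δ has at least two nonzero coordinates
    obtain ⟨k, hk⟩ : ∃ k, δ k ≠ 0 := by
      have : ∃ k, a k ≠ b k := Function.ne_iff.mp hab
      obtain ⟨k, hk⟩ := this
      refine ⟨k, fun h0 => hk ?_⟩
      have : (a k : ZMod p) = (b k : ZMod p) := by
        rw [hδ] at h0; linear_combination h0
      exact hcast (lt_trans (ha k) (htp k)) (lt_trans (hb k) (htp k)) this
    have hpair : ∃ j j', j ≠ j' ∧ δ j ≠ 0 ∧ δ j' ≠ 0 := by
      by_contra hno
      push_neg at hno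
      have hzero : ∀ j, j ≠ k → δ j = 0 := by
        intro j hj
        exact hno k j (Ne.symm hj) hk
      have : ∑ j, δ j • s j • u j = δ k • s k • u k := by
        refine Fintype.sum_eq_single k fun j hj => ?_
        rw [hzero j hj, zero_smul]
      rw [this] at hsol
      rcases smul_eq_zero.mp hsol with h | h
      · exact hk h
      · rcases smul_eq_zero.mp h with h' | h'
        · exact hs0 k h'
        · exact hu0 k h'
    refine mem_biUnion.mpr ⟨δ, ?_, ?_⟩
    · rw [hPairs, mem_filter]; exact ⟨hδD, hpair⟩
    · rw [hSol, mem_filter]; exact ⟨mem_univ _, hsol⟩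
  -- Step 2: card of each solution set
  have hsolcard : ∀ δ ∈ Pairs, (Sol δ).card ≤ p ^ (r - 2) := by
    intro δ hδ
    rw [hPairs, mem_filter] at hδ
    obtain ⟨-, j₀, j₁, hne, hδ0, hδ1⟩ := hδ
    -- project away coordinates j₀, j₁
    classical
    let T := {j : Fin r // j ≠ j₀ ∧ j ≠ j₁}
    have hTcard : Fintype.card T = r - 2 := by
      rw [Fintype.card_subtype]
      have : univ.filter (fun j : Fin r => j ≠ j₀ ∧ j ≠ j₁) = univ \ {j₀, j₁} := by
        ext j; simp [and_comm]
      rw [this, card_sdiff_of_subset (subset_univ _), card_univ, Fintype.card_fin,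
        card_pair hne]
    have hinj : Set.InjOn (fun s : Fin r → ZMod p => (fun j : T => s j.1)) (Sol δ) := by
      intro s hs s' hs' hff
      simp only [hSol, mem_coe, mem_filter] at hs hs'
      have hrest : ∀ j, j ≠ j₀ → j ≠ j₁ → s j = s' j := by
        intro j h0 h1
        exact congrFun hff (⟨j, h0, h1⟩ : T)
      set g : Fin r → Fin 2 → ZMod p := fun j => δ j • (s j - s' j) • u j with hg
      have hgsum : ∑ j, g j = 0 := by
        have : ∑ j, g j = (∑ j, δ j • s j • u j) - ∑ j, δ j • s' j • u j := by
          rw [← Finset.sum_sub_distrib]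
          refine Finset.sum_congr rfl fun j _ => ?_
          simp only [hg, sub_smul, smul_sub]
        rw [this, hs.2, hs'.2, sub_self]
      have hgz : ∀ j, j ≠ j₀ → j ≠ j₁ → g j = 0 := by
        intro j h0 h1
        rw [hg]
        simp [hrest j h0 h1]
      have hsum2 : g j₀ + g j₁ = 0 := by
        have h1 : ∑ j, g j = ∑ j ∈ ({j₀, j₁} : Finset (Fin r)), g j := by
          symm
          refine Finset.sum_subset (subset_univ _) fun j _ hj => ?_
          simp only [mem_insert, mem_singleton, not_or] at hj
          exact hgz j hj.1 hj.2
        rw [h1, Finset.sum_pair hne] at hgsum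
        exact hgsum
      have key : ∀ (j : Fin r), δ j ≠ 0 → (δ j * (s j - s' j)) • u j = g j := by
        intro j _; simp only [hg, smul_smul]
      rw [← key j₀ hδ0, ← key j₁ hδ1] at hsum2
      obtain ⟨e0, e1⟩ := aux_lin_indep_17 (u j₀) (u j₁) (hu0 j₁) (hupar j₀ j₁ hne)
        _ _ hsum2
      have hs0 : s j₀ = s' j₀ := by
        rcases mul_eq_zero.mp e0 with h | h
        · exact absurd h hδ0
        · exact sub_eq_zero.mp h
      have hs1 : s j₁ = s' j₁ := by
        rcases mul_eq_zero.mp e1 with h | h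
        · exact absurd h hδ1
        · exact sub_eq_zero.mp h
      funext j
      by_cases h0 : j = j₀
      · rw [h0]; exact hs0
      · by_cases h1 : j = j₁
        · rw [h1]; exact hs1
        · exact hrest j h0 h1
    calc (Sol δ).card ≤ (univ : Finset (T → ZMod p)).card := by
          refine Finset.card_le_card_of_injOn _ (fun _ _ => mem_univ _) hinj
      _ = p ^ (r - 2) := by
          rw [card_univ, Fintype.card_fun, ZMod.card, hTcard]
  -- Step 3: bound Bad.card
  have hDjcard : ∀ j, (Dj j).card ≤ 2 * t j := by
    intro j
    rw [hDj]
    calc ((Finset.Ioo (-(t j : ℤ)) (t j)).image _).card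
        ≤ (Finset.Ioo (-(t j : ℤ)) (t j)).card := card_image_le
      _ ≤ 2 * t j := by
          rw [Int.card_Ioo]
          omega
  have hDcard : D.card ≤ 2 ^ r * ∏ j, t j := by
    rw [hD, Fintype.card_piFinset]
    calc ∏ j, (Dj j).card ≤ ∏ j : Fin r, 2 * t j :=
          Finset.prod_le_prod (fun _ _ => Nat.zero_le _) (fun j _ => hDjcard j)
      _ = 2 ^ r * ∏ j, t j := by
          rw [Finset.prod_mul_distrib, Finset.prod_const, card_univ, Fintype.card_fin]
  have hBadcard : Bad.card ≤ 2 ^ r * (∏ j, t j) * p ^ (r - 2) := by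
    calc Bad.card ≤ (Pairs.biUnion Sol).card := card_le_card hsub
      _ ≤ ∑ δ ∈ Pairs, (Sol δ).card := card_biUnion_le
      _ ≤ ∑ _δ ∈ Pairs, p ^ (r - 2) := Finset.sum_le_sum hsolcard
      _ = Pairs.card * p ^ (r - 2) := by rw [Finset.sum_const, smul_eq_mul]
      _ ≤ D.card * p ^ (r - 2) := by
          exact Nat.mul_le_mul_right _ (card_le_card (filter_subset _ _))
      _ ≤ 2 ^ r * (∏ j, t j) * p ^ (r - 2) := Nat.mul_le_mul_right _ hDcard
  -- Step 4: card of S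
  have hScard : S.card = (p - 1) ^ r := by
    rw [hS, Fintype.card_piFinset]
    have : ({0}ᶜ : Finset (ZMod p)).card = p - 1 := by
      rw [card_compl, card_singleton, ZMod.card]
    simp [this]
  -- Step 5: compare, conclude
  have hlt : Bad.card < S.card := by
    have h1 : (Bad.card : ℝ) ≤ 2 ^ r * (∏ j, (t j : ℝ)) * (p : ℝ) ^ (r - 2) := by
      calc (Bad.card : ℝ) ≤ ((2 ^ r * (∏ j, t j) * p ^ (r - 2) : ℕ) : ℝ) := by
            exact_mod_cast hBadcard
        _ = 2 ^ r * (∏ j, (t j : ℝ)) * (p : ℝ) ^ (r - 2) := by push_cast; ring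
    have h2 : (S.card : ℝ) = ((p : ℝ) - 1) ^ r := by
      rw [hScard]
      rw [Nat.cast_pow, Nat.cast_sub hp.one_le, Nat.cast_one]
    have : (Bad.card : ℝ) < (S.card : ℝ) := by
      rw [h2]; exact lt_of_le_of_lt h1 hcount
    exact_mod_cast this
  obtain ⟨s, hsS, hsBad⟩ : ∃ s ∈ S, s ∉ Bad := by
    by_contra h
    push_neg at h
    exact absurd (card_le_card h) (not_le.mpr hlt)
  refine ⟨s, ?_, ?_⟩
  · intro j
    have := Fintype.mem_piFinset.mp hsS j
    simpa using this
  · intro a b ha hb heq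
    by_contra hab
    exact hsBad (by
      rw [hBad, mem_filter]
      exact ⟨hsS, by push_neg; exact ⟨a, b, ha, hb, heq, hab⟩⟩)
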